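/- arXiv:2206.09049 — 7 statements merged into one kernel-verified Lean document; each statement's English description precedes it below -/
import Mathlib

section
/- For any nonzero vectors x, y ∈ (ℝ\{0})^N and L-CoLT matrix M, the two-sided scaling diag(x)·M·diag(y) is again an L-CoLT matrix, and it equals E_1 ⊙ M ⊙ E_2 where E_1 has entries (E_1)_{ij} = x_i and E_2 has entries (E_2)_{ij} = y_j on the lower triangular part (zero above the diagonal). -/
open Matrix Finset

/-- `A` is an L-CoLT matrix with ratio vector `r` (0-indexed; `r` has `N-1` meaningful
nonzero entries): `A (i+1) j = r i * A i j` for `j ≤ i`, and `A i j = 0` for `i < j`. -/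
def IsLCoLT {N : ℕ} (A : Matrix (Fin N) (Fin N) ℝ) (r : ℕ → ℝ) : Prop :=
  (∀ k, k + 1 < N → r k ≠ 0) ∧
  (∀ i i' j : Fin N, (i' : ℕ) = (i : ℕ) + 1 → (j : ℕ) ≤ (i : ℕ) → A i' j = r i * A i j) ∧
  (∀ i j : Fin N, (i : ℕ) < (j : ℕ) → A i j = 0)

/-- `A` is a U-CoLT matrix with ratio vector `r'` (0-indexed; `r'` has `N-2` meaningful
nonzero entries): `A (i-1) j = r' (i-1) * A i j` for `i < j`, and `A i j = 0` for `j ≤ i`. -/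
def IsUCoLT {N : ℕ} (A : Matrix (Fin N) (Fin N) ℝ) (r' : ℕ → ℝ) : Prop :=
  (∀ k, k + 2 < N → r' k ≠ 0) ∧
  (∀ i i' j : Fin N, (i : ℕ) = (i' : ℕ) + 1 → (i : ℕ) < (j : ℕ) → A i' j = r' i' * A i j) ∧
  (∀ i j : Fin N, (j : ℕ) ≤ (i : ℕ) → A i j = 0)

/-- two-sided diagonal scaling of an L-CoLT matrix is again L-CoLT, and
equals E_1 ⊙ M ⊙ E_2 where (E_1)_{ij} = x_i and (E_2)_{ij} = y_j on the lower triangle. -/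
theorem stmt8 {N : ℕ} (x y : Fin N → ℝ) (hx : ∀ i, x i ≠ 0) (hy : ∀ i, y i ≠ 0)
    (A : Matrix (Fin N) (Fin N) ℝ) (r : ℕ → ℝ) (hA : IsLCoLT A r) :
    (∃ r', IsLCoLT (Matrix.diagonal x * A * Matrix.diagonal y) r') ∧
    Matrix.diagonal x * A * Matrix.diagonal y =
      Matrix.hadamard
        (Matrix.hadamard
          ((fun i j => if (j : ℕ) ≤ (i : ℕ) then x i else 0) : Matrix (Fin N) (Fin N) ℝ) A)
        ((fun i j => if (j : ℕ) ≤ (i : ℕ) then y j else 0) : Matrix (Fin N) (Fin N) ℝ) := by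
  obtain ⟨hr, hrec, hlt⟩ := hA
  have hent : ∀ i j : Fin N, (Matrix.diagonal x * A * Matrix.diagonal y) i j
      = x i * A i j * y j := by
    intro i j
    rw [Matrix.mul_apply]
    simp [Matrix.mul_apply, Matrix.diagonal_apply, mul_comm]
  constructor
  · refine ⟨fun k => if h : k + 1 < N then r k * x ⟨k+1, h⟩ / x ⟨k, by omega⟩ else 1,
      ?_, ?_, ?_⟩
    · intro k hk
      simp only [dif_pos hk]
      exact div_ne_zero (mul_ne_zero (hr k hk) (hx _)) (hx _)
    · intro i i' j hi hj
      rw [hent, hent]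
      have hlt' : (i : ℕ) + 1 < N := hi ▸ i'.isLt
      simp only [dif_pos hlt']
      have hxi' : x i' = x ⟨(i:ℕ)+1, hlt'⟩ := by congr 1; exact Fin.ext hi
      have hxi : x i = x ⟨(i:ℕ), by omega⟩ := by congr 1
      rw [hrec i i' j hi hj, hxi']
      rw [← hxi, div_mul_eq_mul_div, eq_div_iff (hx i)]
      ring
    · intro i j hij
      rw [hent, hlt i j hij]
      ring
  · ext i j
    rw [hent]
    by_cases h : (j : ℕ) ≤ (i : ℕ)
    · show x i * A i j * y j = (if (j : ℕ) ≤ (i : ℕ) then x i else 0) * A i j * (if (j : ℕ) ≤ (i : ℕ) then y j else 0)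
      simp only [if_pos h]
    · show x i * A i j * y j = (if (j : ℕ) ≤ (i : ℕ) then x i else 0) * A i j * (if (j : ℕ) ≤ (i : ℕ) then y j else 0)
      simp only [if_neg h]
      rw [hlt i j (by omega)]
      ring
end

section
/- The set 𝒞^N of sums A + B, with A an L-CoLT matrix and B a U-CoLT matrix, is closed under the Hadamard product: if M_1 = A_1 + B_1 and M_2 = A_2 + B_2 with A_i L-CoLT and B_i U-CoLT, then M_1 ⊙ M_2 = (A_1 ⊙ A_2) + (B_1 ⊙ B_2) ∈ 𝒞^N. -/
open Matrix Finset

/-- The set 𝒞^N: sums of an L-CoLT and a U-CoLT matrix. -/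
def InCN {N : ℕ} (M : Matrix (Fin N) (Fin N) ℝ) : Prop :=
  ∃ A B : Matrix (Fin N) (Fin N) ℝ,
    (∃ r, IsLCoLT A r) ∧ (∃ r', IsUCoLT B r') ∧ M = A + B

/-- 𝒞^N is closed under the Hadamard product, which splits along the
L-CoLT/U-CoLT decomposition. -/
theorem stmt9 {N : ℕ} (A1 B1 A2 B2 : Matrix (Fin N) (Fin N) ℝ)
    (r1 r2 r1' r2' : ℕ → ℝ)
    (h1 : IsLCoLT A1 r1) (h2 : IsLCoLT A2 r2)
    (h1' : IsUCoLT B1 r1') (h2' : IsUCoLT B2 r2') :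
    Matrix.hadamard (A1 + B1) (A2 + B2) = Matrix.hadamard A1 A2 + Matrix.hadamard B1 B2 ∧
    InCN (Matrix.hadamard (A1 + B1) (A2 + B2)) := by
  have key : Matrix.hadamard (A1 + B1) (A2 + B2) = Matrix.hadamard A1 A2 + Matrix.hadamard B1 B2 := by
    ext i j
    simp only [Matrix.hadamard_apply, Matrix.add_apply]
    rcases lt_or_ge (i : ℕ) (j : ℕ) with h | h
    · rw [h1.2.2 i j h, h2.2.2 i j h]; ring
    · rw [h1'.2.2 i j h, h2'.2.2 i j h]; ring
  refine ⟨key, Matrix.hadamard A1 A2, Matrix.hadamard B1 B2, ⟨fun k => r1 k * r2 k, ?_, ?_, ?_⟩,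
    ⟨fun k => r1' k * r2' k, ?_, ?_, ?_⟩, key⟩
  · exact fun k hk => mul_ne_zero (h1.1 k hk) (h2.1 k hk)
  · intro i i' j hi hj
    simp only [Matrix.hadamard_apply]
    rw [h1.2.1 i i' j hi hj, h2.2.1 i i' j hi hj]; ring
  · intro i j hij
    simp [Matrix.hadamard_apply, h1.2.2 i j hij]
  · exact fun k hk => mul_ne_zero (h1'.1 k hk) (h2'.1 k hk)
  · intro i i' j hi hj
    simp only [Matrix.hadamard_apply]
    rw [h1'.2.1 i i' j hi hj, h2'.2.1 i i' j hi hj]; ring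
  · intro i j hij
    simp [Matrix.hadamard_apply, h1'.2.2 i j hij]
end

section
/- The all-ones matrix 1_N 1_N^T is the identity element of the Abelian group (𝒞^N, ⊙), where 𝒞^N = {A + B : A L-CoLT with nonzero lower triangular entries, B U-CoLT with nonzero strictly upper triangular entries}: for any M ∈ 𝒞^N, M ⊙ (1_N 1_N^T) = M, and the entrywise reciprocal of M (on its support) lies in 𝒞^N and is the inverse of M. -/
open Matrix Finset

/-- The set 𝒞^N with nonzero entries on the supports of the two summands:
sums of an L-CoLT matrix with nonzero lower triangular entries and a U-CoLT matrix
with nonzero strictly upper triangular entries. -/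
def InCNnz {N : ℕ} (M : Matrix (Fin N) (Fin N) ℝ) : Prop :=
  ∃ A B : Matrix (Fin N) (Fin N) ℝ,
    (∃ r, IsLCoLT A r) ∧ (∃ r', IsUCoLT B r') ∧ M = A + B ∧
    (∀ i j : Fin N, (j : ℕ) ≤ (i : ℕ) → A i j ≠ 0) ∧
    (∀ i j : Fin N, (i : ℕ) < (j : ℕ) → B i j ≠ 0)

/-- the all-ones matrix is the Hadamard identity on 𝒞^N, and the entrywise
reciprocal of M lies in 𝒞^N and is the Hadamard inverse of M. -/
theorem stmt10 {N : ℕ} (M : Matrix (Fin N) (Fin N) ℝ) (hM : InCNnz M) :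
    Matrix.hadamard M ((fun _ _ => 1) : Matrix (Fin N) (Fin N) ℝ) = M ∧
    Matrix.hadamard ((fun _ _ => 1) : Matrix (Fin N) (Fin N) ℝ) M = M ∧
    InCNnz ((fun i j => (M i j)⁻¹) : Matrix (Fin N) (Fin N) ℝ) ∧
    Matrix.hadamard M ((fun i j => (M i j)⁻¹) : Matrix (Fin N) (Fin N) ℝ)
      = ((fun _ _ => 1) : Matrix (Fin N) (Fin N) ℝ) := by
  obtain ⟨A, B, ⟨r, hAr, hArec, hAz⟩, ⟨r', hBr, hBrec, hBz⟩, hMAB, hAnz, hBnz⟩ := hM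
  have hML : ∀ i j : Fin N, (j : ℕ) ≤ (i : ℕ) → M i j = A i j := by
    intro i j h
    simp [hMAB, hBz i j h]
  have hMU : ∀ i j : Fin N, (i : ℕ) < (j : ℕ) → M i j = B i j := by
    intro i j h
    simp [hMAB, hAz i j h]
  have hMnz : ∀ i j : Fin N, M i j ≠ 0 := by
    intro i j
    rcases le_or_gt (j : ℕ) (i : ℕ) with h | h
    · rw [hML i j h]; exact hAnz i j h
    · rw [hMU i j h]; exact hBnz i j h
  refine ⟨?_, ?_, ?_, ?_⟩
  · ext i j; simp [Matrix.hadamard]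
  · ext i j; simp [Matrix.hadamard]
  · refine ⟨(fun i j => if (j : ℕ) ≤ (i : ℕ) then (A i j)⁻¹ else 0),
      (fun i j => if (i : ℕ) < (j : ℕ) then (B i j)⁻¹ else 0),
      ⟨fun k => (r k)⁻¹, ?_, ?_, ?_⟩, ⟨fun k => (r' k)⁻¹, ?_, ?_, ?_⟩, ?_, ?_, ?_⟩
    · intro k hk; exact inv_ne_zero (hAr k hk)
    · intro i i' j hi' hj
      have hj' : (j : ℕ) ≤ (i' : ℕ) := by omega
      simp only [if_pos hj, if_pos hj', hArec i i' j hi' hj, mul_inv]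
    · intro i j h
      have : ¬ ((j : ℕ) ≤ (i : ℕ)) := by omega
      simp [this]
    · intro k hk; exact inv_ne_zero (hBr k hk)
    · intro i i' j hi hj
      have hj' : (i' : ℕ) < (j : ℕ) := by omega
      simp only [if_pos hj, if_pos hj', hBrec i i' j hi hj, mul_inv]
    · intro i j h
      have : ¬ ((i : ℕ) < (j : ℕ)) := by omega
      simp [this]
    · ext i j
      rcases le_or_gt (j : ℕ) (i : ℕ) with h | h
      · have h2 : ¬ ((i : ℕ) < (j : ℕ)) := by omega
        show (M i j)⁻¹ = (if (j : ℕ) ≤ (i : ℕ) then (A i j)⁻¹ else 0) + (if (i : ℕ) < (j : ℕ) then (B i j)⁻¹ else 0)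
        rw [hML i j h, if_pos h, if_neg h2, add_zero]
      · have h2 : ¬ ((j : ℕ) ≤ (i : ℕ)) := by omega
        show (M i j)⁻¹ = (if (j : ℕ) ≤ (i : ℕ) then (A i j)⁻¹ else 0) + (if (i : ℕ) < (j : ℕ) then (B i j)⁻¹ else 0)
        rw [hMU i j h, if_pos h, if_neg h2, zero_add]
    · intro i j h; simp [h, inv_ne_zero (hAnz i j h)]
    · intro i j h; simp [h, inv_ne_zero (hBnz i j h)]
  · ext i j
    simp [Matrix.hadamard, mul_inv_cancel₀ (hMnz i j)]
end

section
/- Let Γ be an L-CoLT matrix with diagonal vector γ and ratio vector r, and let C be the matrix with entries c_{ij} = |i-j|·h. Then the sum of all entries of C ⊙ Γ on the lower triangle equals ∑_{k=1}^N p_k, where p_1 = 0, p_2 = h γ_1 r_1, p'_2 = h γ_1 r_1 + h γ_2, and for i ≥ 3, p_i = r_{i-1}(p_{i-1} + p'_{i-1}), p'_i = r_{i-1} p'_{i-1} + h γ_i. That is, ∑_{i ≥ j} (i-j)h · γ_j ∏_{k=j}^{i-1} r_k = ∑_{k=1}^N p_k. -/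
open Matrix Finset

/-- The pair (p_k, p'_k) of the O(N) recursion (0-indexed): p_0 = 0, p'_0 = h γ_0,
p_{k+1} = r_k (p_k + p'_k), p'_{k+1} = r_k p'_k + h γ_{k+1}. -/
def pP (h : ℝ) (γ r : ℕ → ℝ) : ℕ → ℝ × ℝ
  | 0 => (0, h * γ 0)
  | k + 1 => (r k * ((pP h γ r k).1 + (pP h γ r k).2),
              r k * (pP h γ r k).2 + h * γ (k + 1))


lemma pP_eq (h : ℝ) (γ r : ℕ → ℝ) (k : ℕ) :
    (pP h γ r k).1 = ∑ j ∈ range (k+1), ((k - j : ℕ) : ℝ) * h * (γ j * ∏ m ∈ Ico j k, r m) ∧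
    (pP h γ r k).2 = ∑ j ∈ range (k+1), h * (γ j * ∏ m ∈ Ico j k, r m) := by
  induction k with
  | zero => simp [pP]
  | succ k ih =>
    obtain ⟨h1, h2⟩ := ih
    have key : ∀ j, j ∈ range (k+1) → r k * (γ j * ∏ m ∈ Ico j k, r m)
        = γ j * ∏ m ∈ Ico j (k+1), r m := by
      intro j hj
      rw [Finset.prod_Ico_succ_top (Nat.lt_succ_iff.mp (mem_range.mp hj))]
      ring
    constructor
    · show r k * ((pP h γ r k).1 + (pP h γ r k).2) = _
      rw [h1, h2, Finset.sum_range_succ (n := k+1)]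
      have : (((k+1) - (k+1) : ℕ) : ℝ) * h * (γ (k+1) * ∏ m ∈ Ico (k+1) (k+1), r m) = 0 := by
        simp
      rw [this, add_zero, ← Finset.sum_add_distrib, Finset.mul_sum]
      refine Finset.sum_congr rfl fun j hj => ?_
      have hjk := Nat.lt_succ_iff.mp (mem_range.mp hj)
      rw [← key j hj]
      have : (((k+1) - j : ℕ) : ℝ) = ((k - j : ℕ) : ℝ) + 1 := by
        push_cast [Nat.succ_sub hjk]; ring
      rw [this]; ring
    · show r k * (pP h γ r k).2 + h * γ (k+1) = _
      rw [h2, Finset.sum_range_succ (n := k+1), Finset.mul_sum]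
      congr 1
      · refine Finset.sum_congr rfl fun j hj => ?_
        rw [← key j hj]; ring
      · simp

/-- the sum of the lower-triangular entries of C ⊙ Γ, where C_{ij} = |i-j|h
and Γ is the L-CoLT matrix with data (γ, r), equals ∑_k p_k. -/
theorem stmt13 {N : ℕ} (h : ℝ) (hh : 0 < h) (γ r : ℕ → ℝ) (hr : ∀ k, k + 1 < N → r k ≠ 0) :
    ∑ i : Fin N, ∑ j : Fin N,
      (if (j : ℕ) ≤ (i : ℕ) then
        ((((i : ℕ) - (j : ℕ) : ℕ)) : ℝ) * h *
          (γ (j : ℕ) * ∏ k ∈ Finset.Ico (j : ℕ) (i : ℕ), r k)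
      else 0)
      = ∑ k : Fin N, (pP h γ r (k : ℕ)).1 := by
  refine Finset.sum_congr rfl fun i _ => ?_
  rw [(pP_eq h γ r (i : ℕ)).1]
  rw [Fin.sum_univ_eq_sum_range (fun j => if j ≤ (i : ℕ) then
      ((((i : ℕ) - j : ℕ)) : ℝ) * h * (γ j * ∏ k ∈ Finset.Ico j (i : ℕ), r k) else 0)]
  rw [← Finset.sum_filter]
  congr 1
  ext x
  simp only [Finset.mem_filter, Finset.mem_range, Nat.lt_succ_iff]
  have := i.isLt
  omega
end

section
/- Block closure under Hadamard product: the set 𝒞^{N,M} of MN×MN block matrices A (with M² blocks of size N×N) satisfying (i) each diagonal block A_{k,k} ∈ 𝒞^N, (ii) there exist vectors r^L, r^U ∈ (ℝ\{0})^{(M-1)N} with A_{i+1,j} = diag(r^L_i) A_{i,j} for j ≤ i and A_{i-1,j} = diag(r^U_{i-1}) A_{i,j} for i ≤ j, is closed under the Hadamard product. -/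
open Matrix Finset

/-- The block set 𝒞^{N,M}: an MN×MN block matrix (indexed by Fin M × Fin N, first
component the block index) whose diagonal blocks lie in 𝒞^N and whose blocks satisfy
A_{i+1,j} = diag(r^L_i) A_{i,j} for j ≤ i and A_{i-1,j} = diag(r^U_{i-1}) A_{i,j} for
i ≤ j, with the block ratio vectors r^L, r^U ∈ (ℝ\{0})^{(M-1)N}. -/
def IsBlockCoLT {N M : ℕ} (A : Matrix (Fin M × Fin N) (Fin M × Fin N) ℝ)
    (rL rU : ℕ → Fin N → ℝ) : Prop :=
  (∀ k : Fin M, InCN ((fun a b => A (k, a) (k, b)) : Matrix (Fin N) (Fin N) ℝ)) ∧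
  (∀ k, k + 1 < M → ∀ a, rL k a ≠ 0) ∧
  (∀ k, k + 1 < M → ∀ a, rU k a ≠ 0) ∧
  (∀ i i' j : Fin M, (i' : ℕ) = (i : ℕ) + 1 → (j : ℕ) ≤ (i : ℕ) → ∀ a b : Fin N,
    A (i', a) (j, b) = rL (i : ℕ) a * A (i, a) (j, b)) ∧
  (∀ i i' j : Fin M, (i : ℕ) = (i' : ℕ) + 1 → (i : ℕ) ≤ (j : ℕ) → ∀ a b : Fin N,
    A (i', a) (j, b) = rU (i' : ℕ) a * A (i, a) (j, b))

lemma InCN.hadamard {N : ℕ} {P Q : Matrix (Fin N) (Fin N) ℝ} (hP : InCN P) (hQ : InCN Q) :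
    InCN (Matrix.hadamard P Q) := by
  obtain ⟨A, B, ⟨r, hA⟩, ⟨r', hB⟩, rfl⟩ := hP
  obtain ⟨A', B', ⟨s, hA'⟩, ⟨s', hB'⟩, rfl⟩ := hQ
  refine ⟨Matrix.hadamard A A', Matrix.hadamard B B',
    ⟨fun k => r k * s k, ?_, ?_, ?_⟩, ⟨fun k => r' k * s' k, ?_, ?_, ?_⟩, ?_⟩
  · exact fun k hk => mul_ne_zero (hA.1 k hk) (hA'.1 k hk)
  · intro i i' j h1 h2
    simp only [Matrix.hadamard_apply, hA.2.1 i i' j h1 h2, hA'.2.1 i i' j h1 h2]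
    ring
  · intro i j h
    simp [Matrix.hadamard_apply, hA.2.2 i j h]
  · exact fun k hk => mul_ne_zero (hB.1 k hk) (hB'.1 k hk)
  · intro i i' j h1 h2
    simp only [Matrix.hadamard_apply, hB.2.1 i i' j h1 h2, hB'.2.1 i i' j h1 h2]
    ring
  · intro i j h
    simp [Matrix.hadamard_apply, hB.2.2 i j h]
  · ext i j
    simp only [Matrix.hadamard_apply, Matrix.add_apply]
    rcases lt_or_ge (i : ℕ) (j : ℕ) with h | h
    · rw [hA.2.2 i j h, hA'.2.2 i j h]; ring
    · rw [hB.2.2 i j h, hB'.2.2 i j h]; ring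

/-- 𝒞^{N,M} is closed under the Hadamard product. -/
theorem stmt14 {N M : ℕ} (A B : Matrix (Fin M × Fin N) (Fin M × Fin N) ℝ)
    (rL rU sL sU : ℕ → Fin N → ℝ)
    (hA : IsBlockCoLT A rL rU) (hB : IsBlockCoLT B sL sU) :
    IsBlockCoLT (Matrix.hadamard A B)
      (fun k a => rL k a * sL k a) (fun k a => rU k a * sU k a) := by
  obtain ⟨hA1, hA2, hA3, hA4, hA5⟩ := hA
  obtain ⟨hB1, hB2, hB3, hB4, hB5⟩ := hB
  refine ⟨?_, ?_, ?_, ?_, ?_⟩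
  · intro k
    have := InCN.hadamard (hA1 k) (hB1 k)
    exact this
  · exact fun k hk a => mul_ne_zero (hA2 k hk a) (hB2 k hk a)
  · exact fun k hk a => mul_ne_zero (hA3 k hk a) (hB3 k hk a)
  · intro i i' j h1 h2 a b
    simp only [Matrix.hadamard_apply, hA4 i i' j h1 h2 a b, hB4 i i' j h1 h2 a b]
    ring
  · intro i i' j h1 h2 a b
    simp only [Matrix.hadamard_apply, hA5 i i' j h1 h2 a b, hB5 i i' j h1 h2 a b]
    ring
end

section
/- Block scaling permutation: for any x ∈ (ℝ\{0})^{MN}, the maps A ↦ diag(x)·A and A ↦ A·diag(x) are bijections of the block set 𝒞^{N,M} onto itself. -/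
open Matrix Finset

section Aux

variable {N M : ℕ}

lemma lcolt_row_scale {A : Matrix (Fin N) (Fin N) ℝ} {r : ℕ → ℝ}
    (h : IsLCoLT A r) (d : Fin N → ℝ) (hd : ∀ a, d a ≠ 0) :
    IsLCoLT (fun i j => d i * A i j)
      (fun k => if h : k + 1 < N then
        r k * d ⟨k + 1, h⟩ * (d ⟨k, Nat.lt_of_succ_lt h⟩)⁻¹ else r k) := by
  obtain ⟨h1, h2, h3⟩ := h
  refine ⟨fun k hk => ?_, fun i i' j hi' hj => ?_, fun i j hij => ?_⟩ <;> dsimp only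
  · rw [dif_pos hk]
    exact mul_ne_zero (mul_ne_zero (h1 k hk) (hd _)) (inv_ne_zero (hd _))
  · have hlt : (i : ℕ) + 1 < N := hi' ▸ i'.isLt
    rw [dif_pos hlt]
    have e1 : (⟨(i : ℕ) + 1, hlt⟩ : Fin N) = i' := Fin.ext hi'.symm
    have e2 : (⟨(i : ℕ), Nat.lt_of_succ_lt hlt⟩ : Fin N) = i := Fin.ext rfl
    rw [e1, e2, h2 i i' j hi' hj]
    field_simp
    rw [eq_div_iff (hd i)]
  · rw [h3 i j hij, mul_zero]

lemma ucolt_row_scale {A : Matrix (Fin N) (Fin N) ℝ} {r : ℕ → ℝ}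
    (h : IsUCoLT A r) (d : Fin N → ℝ) (hd : ∀ a, d a ≠ 0) :
    IsUCoLT (fun i j => d i * A i j)
      (fun k => if h : k + 1 < N then
        r k * d ⟨k, Nat.lt_of_succ_lt h⟩ * (d ⟨k + 1, h⟩)⁻¹ else r k) := by
  obtain ⟨h1, h2, h3⟩ := h
  refine ⟨fun k hk => ?_, fun i i' j hi hij => ?_, fun i j hij => ?_⟩ <;> dsimp only
  · rw [dif_pos (Nat.lt_of_succ_lt hk)]
    exact mul_ne_zero (mul_ne_zero (h1 k hk) (hd _)) (inv_ne_zero (hd _))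
  · have hlt : (i' : ℕ) + 1 < N := hi ▸ i.isLt
    rw [dif_pos hlt]
    have e1 : (⟨(i' : ℕ) + 1, hlt⟩ : Fin N) = i := Fin.ext hi.symm
    have e2 : (⟨(i' : ℕ), Nat.lt_of_succ_lt hlt⟩ : Fin N) = i' := Fin.ext rfl
    rw [e1, e2, h2 i i' j hi hij]
    field_simp
    rw [eq_div_iff (hd i)]
  · rw [h3 i j hij, mul_zero]

lemma incn_row_scale {A : Matrix (Fin N) (Fin N) ℝ} (h : InCN A)
    (d : Fin N → ℝ) (hd : ∀ a, d a ≠ 0) :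
    InCN (fun i j => d i * A i j) := by
  obtain ⟨B, C, ⟨r, hB⟩, ⟨r', hC⟩, hA⟩ := h
  refine ⟨fun i j => d i * B i j, fun i j => d i * C i j,
    ⟨_, lcolt_row_scale hB d hd⟩, ⟨_, ucolt_row_scale hC d hd⟩, ?_⟩
  funext i j
  simp [hA, Matrix.add_apply, mul_add]
  rfl

lemma lcolt_col_scale {A : Matrix (Fin N) (Fin N) ℝ} {r : ℕ → ℝ}
    (h : IsLCoLT A r) (d : Fin N → ℝ) :
    IsLCoLT (fun i j => A i j * d j) r := by
  obtain ⟨h1, h2, h3⟩ := h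
  exact ⟨h1, fun i i' j hi' hj => by dsimp only; rw [h2 i i' j hi' hj]; ring,
    fun i j hij => by dsimp only; rw [h3 i j hij, zero_mul]⟩

lemma ucolt_col_scale {A : Matrix (Fin N) (Fin N) ℝ} {r : ℕ → ℝ}
    (h : IsUCoLT A r) (d : Fin N → ℝ) :
    IsUCoLT (fun i j => A i j * d j) r := by
  obtain ⟨h1, h2, h3⟩ := h
  exact ⟨h1, fun i i' j hi hij => by dsimp only; rw [h2 i i' j hi hij]; ring,
    fun i j hij => by dsimp only; rw [h3 i j hij, zero_mul]⟩

lemma incn_col_scale {A : Matrix (Fin N) (Fin N) ℝ} (h : InCN A)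
    (d : Fin N → ℝ) : InCN (fun i j => A i j * d j) := by
  obtain ⟨B, C, ⟨r, hB⟩, ⟨r', hC⟩, hA⟩ := h
  refine ⟨fun i j => B i j * d j, fun i j => C i j * d j,
    ⟨_, lcolt_col_scale hB d⟩, ⟨_, ucolt_col_scale hC d⟩, ?_⟩
  funext i j
  simp [hA, Matrix.add_apply, add_mul]
  rfl

lemma block_left_scale (x : Fin M × Fin N → ℝ) (hx : ∀ i, x i ≠ 0)
    {A : Matrix (Fin M × Fin N) (Fin M × Fin N) ℝ} {rL rU : ℕ → Fin N → ℝ}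
    (h : IsBlockCoLT A rL rU) :
    ∃ rL' rU', IsBlockCoLT (Matrix.diagonal x * A) rL' rU' := by
  obtain ⟨hdiag, hL0, hU0, hL, hU⟩ := h
  refine ⟨fun k a => if h : k + 1 < M then
      rL k a * x (⟨k + 1, h⟩, a) * (x (⟨k, Nat.lt_of_succ_lt h⟩, a))⁻¹ else rL k a,
    fun k a => if h : k + 1 < M then
      rU k a * x (⟨k, Nat.lt_of_succ_lt h⟩, a) * (x (⟨k + 1, h⟩, a))⁻¹ else rU k a,
    fun k => ?_, fun k hk a => ?_, fun k hk a => ?_,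
    fun i i' j hi' hj a b => ?_, fun i i' j hi hij a b => ?_⟩
  · have := incn_row_scale (hdiag k) (fun a => x (k, a)) (fun a => hx _)
    convert this using 2 with a b
    simp only [Matrix.diagonal_mul]
  · dsimp only; rw [dif_pos hk]
    exact mul_ne_zero (mul_ne_zero (hL0 k hk a) (hx _)) (inv_ne_zero (hx _))
  · dsimp only; rw [dif_pos hk]
    exact mul_ne_zero (mul_ne_zero (hU0 k hk a) (hx _)) (inv_ne_zero (hx _))
  · dsimp only
    have hlt : (i : ℕ) + 1 < M := hi' ▸ i'.isLt
    rw [Matrix.diagonal_mul, Matrix.diagonal_mul, dif_pos hlt]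
    have e1 : (⟨(i : ℕ) + 1, hlt⟩ : Fin M) = i' := Fin.ext hi'.symm
    have e2 : (⟨(i : ℕ), Nat.lt_of_succ_lt hlt⟩ : Fin M) = i := Fin.ext rfl
    rw [e1, e2, hL i i' j hi' hj a b]
    field_simp
    rw [eq_div_iff (hx (i, a))]
  · dsimp only
    have hlt : (i' : ℕ) + 1 < M := hi ▸ i.isLt
    rw [Matrix.diagonal_mul, Matrix.diagonal_mul, dif_pos hlt]
    have e1 : (⟨(i' : ℕ) + 1, hlt⟩ : Fin M) = i := Fin.ext hi.symm
    have e2 : (⟨(i' : ℕ), Nat.lt_of_succ_lt hlt⟩ : Fin M) = i' := Fin.ext rfl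
    rw [e1, e2, hU i i' j hi hij a b]
    field_simp
    rw [eq_div_iff (hx (i, a))]

lemma block_right_scale (x : Fin M × Fin N → ℝ)
    {A : Matrix (Fin M × Fin N) (Fin M × Fin N) ℝ} {rL rU : ℕ → Fin N → ℝ}
    (h : IsBlockCoLT A rL rU) :
    IsBlockCoLT (A * Matrix.diagonal x) rL rU := by
  obtain ⟨hdiag, hL0, hU0, hL, hU⟩ := h
  refine ⟨fun k => ?_, hL0, hU0, fun i i' j hi' hj a b => ?_, fun i i' j hi hij a b => ?_⟩
  · have := incn_col_scale (hdiag k) (fun b => x (k, b))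
    convert this using 2 with a b
    simp only [Matrix.mul_diagonal]
  · rw [Matrix.mul_diagonal, Matrix.mul_diagonal, hL i i' j hi' hj a b]; ring
  · rw [Matrix.mul_diagonal, Matrix.mul_diagonal, hU i i' j hi hij a b]; ring

end Aux

/-- for nonzero x ∈ ℝ^{MN}, the maps A ↦ diag(x)·A and A ↦ A·diag(x)
are bijections of 𝒞^{N,M} onto itself. -/
theorem stmt15 {N M : ℕ} (x : Fin M × Fin N → ℝ) (hx : ∀ i, x i ≠ 0) :
    Set.BijOn (fun A => Matrix.diagonal x * A)
      {A : Matrix (Fin M × Fin N) (Fin M × Fin N) ℝ | ∃ rL rU, IsBlockCoLT A rL rU}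
      {A : Matrix (Fin M × Fin N) (Fin M × Fin N) ℝ | ∃ rL rU, IsBlockCoLT A rL rU} ∧
    Set.BijOn (fun A => A * Matrix.diagonal x)
      {A : Matrix (Fin M × Fin N) (Fin M × Fin N) ℝ | ∃ rL rU, IsBlockCoLT A rL rU}
      {A : Matrix (Fin M × Fin N) (Fin M × Fin N) ℝ | ∃ rL rU, IsBlockCoLT A rL rU} := by
  set S := {A : Matrix (Fin M × Fin N) (Fin M × Fin N) ℝ | ∃ rL rU, IsBlockCoLT A rL rU}
  have hx' : ∀ i, (x i)⁻¹ ≠ 0 := fun i => inv_ne_zero (hx i)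
  have hinv : Matrix.diagonal (fun i => (x i)⁻¹) * Matrix.diagonal x = 1 := by
    rw [Matrix.diagonal_mul_diagonal]
    convert Matrix.diagonal_one using 2
    funext i
    exact inv_mul_cancel₀ (hx i)
  have hinv' : Matrix.diagonal x * Matrix.diagonal (fun i => (x i)⁻¹) = 1 := by
    rw [Matrix.diagonal_mul_diagonal]
    convert Matrix.diagonal_one using 2
    funext i
    exact mul_inv_cancel₀ (hx i)
  constructor
  · apply Set.InvOn.bijOn (f' := fun A => Matrix.diagonal (fun i => (x i)⁻¹) * A)
    · constructor
      · intro A _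
        simp only [← Matrix.mul_assoc, hinv, Matrix.one_mul]
      · intro A _
        simp only [← Matrix.mul_assoc, hinv', Matrix.one_mul]
    · rintro A ⟨rL, rU, hA⟩
      exact block_left_scale x hx hA
    · rintro A ⟨rL, rU, hA⟩
      exact block_left_scale (fun i => (x i)⁻¹) hx' hA
  · apply Set.InvOn.bijOn (f' := fun A => A * Matrix.diagonal (fun i => (x i)⁻¹))
    · constructor
      · intro A _
        simp only [Matrix.mul_assoc, hinv', Matrix.mul_one]
      · intro A _
        simp only [Matrix.mul_assoc, hinv, Matrix.mul_one]
    · rintro A ⟨rL, rU, hA⟩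
      exact ⟨rL, rU, block_right_scale x hA⟩
    · rintro A ⟨rL, rU, hA⟩
      exact ⟨rL, rU, block_right_scale (fun i => (x i)⁻¹) hA⟩
end

section
/- The 2D kernel matrix K ∈ ℝ^{NM×NM} with blocks K_{i,j} = λ_2^{|i-j|} K_0, where K_0 ∈ ℝ^{N×N} has entries (K_0)_{kl} = λ_1^{|k-l|} and λ_1, λ_2 ∈ (0,1), belongs to 𝒞^{N,M} with block ratio vectors r^L_i = λ_2·1_N and r^U_i = λ_2·1_N. -/
open Matrix Finset

/-- the 2D kernel matrix with blocks K_{i,j} = λ₂^{|i-j|} K₀, where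
(K₀)_{kl} = λ₁^{|k-l|}, lies in 𝒞^{N,M} with block ratio vectors r^L_i = r^U_i = λ₂·1_N. -/
theorem stmt18 {N M : ℕ} (lam1 lam2 : ℝ)
    (h1 : 0 < lam1) (h1' : lam1 < 1) (h2 : 0 < lam2) (h2' : lam2 < 1) :
    IsBlockCoLT
      ((fun p q =>
          lam2 ^ (((p.1 : ℕ) - (q.1 : ℕ)) + ((q.1 : ℕ) - (p.1 : ℕ))) *
          lam1 ^ (((p.2 : ℕ) - (q.2 : ℕ)) + ((q.2 : ℕ) - (p.2 : ℕ)))) :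
        Matrix (Fin M × Fin N) (Fin M × Fin N) ℝ)
      (fun _ _ => lam2) (fun _ _ => lam2) := by
  refine ⟨?_, fun _ _ _ => ne_of_gt h2, fun _ _ _ => ne_of_gt h2, ?_, ?_⟩
  · intro k
    refine ⟨(fun a b => if (b : ℕ) ≤ (a : ℕ) then lam1 ^ ((a : ℕ) - (b : ℕ)) else 0),
            (fun a b => if (a : ℕ) < (b : ℕ) then lam1 ^ ((b : ℕ) - (a : ℕ)) else 0),
            ⟨fun _ => lam1, ?_, ?_, ?_⟩, ⟨fun _ => lam1, ?_, ?_, ?_⟩, ?_⟩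
    · exact fun _ _ => ne_of_gt h1
    · intro i i' j hi hj
      have hj' : (j : ℕ) ≤ (i' : ℕ) := by omega
      simp only [hj, hj', if_true]
      rw [show (i' : ℕ) - (j : ℕ) = ((i : ℕ) - (j : ℕ)) + 1 by omega, pow_succ]
      ring
    · intro i j hij
      simp only [Nat.not_le.mpr hij, if_false]
    · exact fun _ _ => ne_of_gt h1
    · intro i i' j hi hj
      have hj' : (i' : ℕ) < (j : ℕ) := by omega
      simp only [hj, hj', if_true]
      rw [show (j : ℕ) - (i' : ℕ) = ((j : ℕ) - (i : ℕ)) + 1 by omega, pow_succ]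
      ring
    · intro i j hij
      simp only [Nat.not_lt.mpr hij, if_false]
    · funext a b
      simp only [Matrix.add_apply]
      show _ = (if (b : ℕ) ≤ (a : ℕ) then lam1 ^ ((a : ℕ) - (b : ℕ)) else 0) + (if (a : ℕ) < (b : ℕ) then lam1 ^ ((b : ℕ) - (a : ℕ)) else 0)
      rcases le_or_gt (b : ℕ) (a : ℕ) with h | h
      · simp [Pi.add_apply, h, Nat.not_lt.mpr h, Nat.sub_eq_zero_of_le h]
      · simp [Pi.add_apply, h, Nat.not_le.mpr h, Nat.sub_eq_zero_of_le (le_of_lt h)]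
  · intro i i' j hii' hji a b
    simp only
    rw [show ((i' : ℕ) - (j : ℕ)) + ((j : ℕ) - (i' : ℕ))
        = (((i : ℕ) - (j : ℕ)) + ((j : ℕ) - (i : ℕ))) + 1 by omega, pow_succ]
    ring
  · intro i i' j hii' hij a b
    simp only
    rw [show ((i' : ℕ) - (j : ℕ)) + ((j : ℕ) - (i' : ℕ))
        = (((i : ℕ) - (j : ℕ)) + ((j : ℕ) - (i : ℕ))) + 1 by omega, pow_succ]
    ring
end
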